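/- Let n ≥ 2 and m ≥ 1, and let λ be an n-core. Then λ is also an (mn+1)-core if and only if for every residue i ∈ ℤ/nℤ, the number of removable i-boxes of λ is at most m. -/

import Mathlib

open scoped BigOperators

namespace FV

/-- The standard inner product on ℝⁿ. -/
def ip (n : ℕ) (v w : Fin n → ℝ) : ℝ := ∑ i, v i * w i

/-- Standard basis vector `e i` (0-indexed; junk `0` if `i ≥ n`). -/
def e (n : ℕ) (i : ℕ) : Fin n → ℝ := fun j => if (j : ℕ) = i then 1 else 0

/-- The subspace `V` of sum-zero vectors. -/
def V0 (n : ℕ) : Set (Fin n → ℝ) := {v | ∑ i, v i = 0}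

/-- Simple root `αᵢ = eᵢ − eᵢ₊₁` (paper 1-indexing: meaningful for 1 ≤ i ≤ n−1). -/
def sroot (n : ℕ) (i : ℕ) : Fin n → ℝ := e n (i - 1) - e n i

/-- The positive roots `eᵢ − eⱼ`, i < j. -/
def PosRoot (n : ℕ) : Set (Fin n → ℝ) := {α | ∃ a b : ℕ, a < b ∧ b < n ∧ α = e n a - e n b}

/-- All roots. -/
def Roots (n : ℕ) : Set (Fin n → ℝ) := PosRoot n ∪ (-PosRoot n)

/-- The highest root θ = e₁ − eₙ. -/
def theta (n : ℕ) : Fin n → ℝ := e n 0 - e n (n - 1)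

/-- Closed half-space H⁺_{α,k} ⊆ V. -/
def Hplus (n : ℕ) (α : Fin n → ℝ) (k : ℝ) : Set (Fin n → ℝ) := {v | v ∈ V0 n ∧ k ≤ ip n v α}

/-- Closed half-space H⁻_{α,k} ⊆ V. -/
def Hminus (n : ℕ) (α : Fin n → ℝ) (k : ℝ) : Set (Fin n → ℝ) := {v | v ∈ V0 n ∧ ip n v α ≤ k}

/-- Affine hyperplane H_{α,k} ⊆ V. -/
def Hyp (n : ℕ) (α : Fin n → ℝ) (k : ℝ) : Set (Fin n → ℝ) := {v | v ∈ V0 n ∧ ip n v α = k}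

/-- The (open) fundamental alcove A₀. -/
def A0 (n : ℕ) : Set (Fin n → ℝ) :=
  {v | v ∈ V0 n ∧ (∀ i : ℕ, 1 ≤ i → i ≤ n - 1 → 0 < ip n v (sroot n i)) ∧ ip n v (theta n) < 1}

/-- The dominant chamber. -/
def Dominant (n : ℕ) : Set (Fin n → ℝ) :=
  {v | v ∈ V0 n ∧ ∀ i : ℕ, 1 ≤ i → i ≤ n - 1 → 0 ≤ ip n v (sroot n i)}

/-- Coordinate swap, as a permutation of ℝⁿ. -/
def swapPerm (n : ℕ) (a b : Fin n) : Equiv.Perm (Fin n → ℝ) :=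
  (Equiv.swap a b).arrowCongr (Equiv.refl ℝ)

/-- The affine reflection s₀ : (a₁,...,aₙ) ↦ (aₙ+1, a₂, ..., a_{n−1}, a₁−1). -/
def s0 (n : ℕ) : Equiv.Perm (Fin n → ℝ) :=
  if h : 2 ≤ n then
    (swapPerm n ⟨0, by omega⟩ ⟨n - 1, by omega⟩).trans (Equiv.addLeft (e n 0 - e n (n - 1)))
  else Equiv.refl _

/-- The generators s₀, s₁, ..., s_{n−1} of the affine symmetric group; for i ≥ 1,
`gen n i` swaps the (i−1)-st and i-th (0-indexed) coordinates. -/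
def gen (n : ℕ) (i : Fin n) : Equiv.Perm (Fin n → ℝ) :=
  if (i : ℕ) = 0 then s0 n
  else swapPerm n ⟨(i : ℕ) - 1, lt_of_le_of_lt (Nat.sub_le _ _) i.isLt⟩ i

/-- The affine symmetric group Ŝₙ, acting on ℝⁿ. -/
def AffS (n : ℕ) : Subgroup (Equiv.Perm (Fin n → ℝ)) := Subgroup.closure (Set.range (gen n))

/-- The finite symmetric group Sₙ ⊆ Ŝₙ, generated by s₁, ..., s_{n−1}. -/
def SymS (n : ℕ) : Subgroup (Equiv.Perm (Fin n → ℝ)) :=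
  Subgroup.closure {g | ∃ i : Fin n, (i : ℕ) ≠ 0 ∧ g = gen n i}

/-- Coxeter length: word length in the generators. -/
noncomputable def len (n : ℕ) (w : Equiv.Perm (Fin n → ℝ)) : ℕ :=
  sInf {k | ∃ l : List (Fin n), l.length = k ∧ (l.map (gen n)).prod = w}

/-- w is a minimal length representative of its left coset wSₙ. -/
def IsMinCosetRep (n : ℕ) (w : Equiv.Perm (Fin n → ℝ)) : Prop :=
  w ∈ AffS n ∧ ∀ u ∈ SymS n, len n w ≤ len n (w * u)

/-- The complement (in V) of the m-Shi arrangement. -/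
def ShiComp (n : ℕ) (m : ℕ) : Set (Fin n → ℝ) :=
  V0 n \ ⋃ (α ∈ PosRoot n), ⋃ (k : ℤ), ⋃ (_ : -(m : ℤ) < k ∧ k ≤ (m : ℤ)), Hyp n α (k : ℝ)

/-- The alcoves wA₀ and w'A₀ lie in the same region (connected component) of the
complement of the m-Shi arrangement. -/
def SameRegion (n m : ℕ) (w w' : Equiv.Perm (Fin n → ℝ)) : Prop :=
  ∃ v ∈ ⇑w '' A0 n, ∃ v' ∈ ⇑w' '' A0 n, v' ∈ connectedComponentIn (ShiComp n m) v

/-- The alcove wA₀ is m-minimal. -/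
def MMinimal (n m : ℕ) (w : Equiv.Perm (Fin n → ℝ)) : Prop :=
  ∀ w' ∈ AffS n, SameRegion n m w w' → len n w ≤ len n w'

/-- `w(α + kδ) = β + lδ`: the affine-linear function v ↦ ⟨v,α⟩ + k, pulled back
along w⁻¹, equals v ↦ ⟨v,β⟩ + l on V. -/
def AffMapsTo (n : ℕ) (w : Equiv.Perm (Fin n → ℝ)) (α : Fin n → ℝ) (k : ℤ)
    (β : Fin n → ℝ) (l : ℤ) : Prop :=
  ∀ v ∈ V0 n, ip n (w⁻¹ v) α + (k : ℝ) = ip n v β + (l : ℝ)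

/-- α + kδ is a positive affine root. -/
def PosAff (n : ℕ) (α : Fin n → ℝ) (k : ℤ) : Prop :=
  α ∈ Roots n ∧ (0 < k ∨ (k = 0 ∧ α ∈ PosRoot n))

/-- α + kδ is a negative affine root. -/
def NegAff (n : ℕ) (α : Fin n → ℝ) (k : ℤ) : Prop :=
  α ∈ Roots n ∧ (k < 0 ∨ (k = 0 ∧ -α ∈ PosRoot n))

/-- α + kδ ∈ Inv(w). -/
def InInv (n : ℕ) (w : Equiv.Perm (Fin n → ℝ)) (α : Fin n → ℝ) (k : ℤ) : Prop :=
  PosAff n α k ∧ ∃ β : Fin n → ℝ, ∃ l : ℤ, NegAff n β l ∧ AffMapsTo n w α k β l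

/-- The simple affine root αᵢ, as a pair (finite root, δ-coefficient); α₀ = δ − θ. -/
def sAff (n : ℕ) (i : Fin n) : (Fin n → ℝ) × ℤ :=
  if (i : ℕ) = 0 then (-(theta n), 1) else (sroot n (i : ℕ), 0)

/-- Hook length of the (0-indexed) box (i,j):
1 + #boxes strictly to the right + #boxes strictly below. -/
def hook (lam : YoungDiagram) (i j : ℕ) : ℕ :=
  (lam.rowLen i - (j + 1)) + (lam.colLen j - (i + 1)) + 1

/-- λ is an s-core: no hook length is divisible by s. -/
def IsCore (s : ℕ) (lam : YoungDiagram) : Prop := ∀ c ∈ lam.cells, ¬ (s ∣ hook lam c.1 c.2)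

/-- A removable box of λ: a box of λ of hook length 1. -/
def Removable (lam : YoungDiagram) (c : ℕ × ℕ) : Prop := c ∈ lam ∧ hook lam c.1 c.2 = 1

/-- An addable box of λ: a box outside λ whose adjunction gives a partition. -/
def Addable (lam : YoungDiagram) (c : ℕ × ℕ) : Prop :=
  c ∉ lam ∧ ∃ mu : YoungDiagram, (mu.cells : Set (ℕ × ℕ)) = insert c (lam.cells : Set (ℕ × ℕ))

/-- The residue (j − i) mod n of a box. -/
def res (n : ℕ) (c : ℕ × ℕ) : ZMod n := (c.2 : ZMod n) - (c.1 : ZMod n)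

/-- A removable box of residue r. -/
def RemovableRes (n : ℕ) (r : ZMod n) (lam : YoungDiagram) (c : ℕ × ℕ) : Prop :=
  Removable lam c ∧ res n c = r

/-- An addable box of residue r. -/
def AddableRes (n : ℕ) (r : ZMod n) (lam : YoungDiagram) (c : ℕ × ℕ) : Prop :=
  Addable lam c ∧ res n c = r

open scoped Classical in
/-- The cell set of sᵣλ: adjoin all addable r-boxes if there are any, else delete all
removable r-boxes if there are any, else λ itself. -/
noncomputable def sActSet (n : ℕ) (r : ZMod n) (lam : YoungDiagram) : Set (ℕ × ℕ) :=
  if ∃ c, AddableRes n r lam c then (lam.cells : Set (ℕ × ℕ)) ∪ {c | AddableRes n r lam c}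
  else if ∃ c, RemovableRes n r lam c then
    (lam.cells : Set (ℕ × ℕ)) \ {c | RemovableRes n r lam c}
  else (lam.cells : Set (ℕ × ℕ))

open scoped Classical in
/-- sᵣλ as a Young diagram (junk value λ if the resulting cell set is not a diagram). -/
noncomputable def sFun (n : ℕ) (r : ZMod n) (lam : YoungDiagram) : YoungDiagram :=
  if h : ∃ mu : YoungDiagram, (mu.cells : Set (ℕ × ℕ)) = sActSet n r lam then h.choose else lam

/-- The partition s_{i₁}(s_{i₂}(⋯ s_{i_k}(∅))) for a word l = [i₁, ..., i_k]. -/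
noncomputable def wordAct (n : ℕ) (l : List (Fin n)) : YoungDiagram :=
  l.foldr (fun i mu => sFun n ((i : ℕ) : ZMod n) mu) ⊥

/-- `w∅ = λ`: some word for w sends the empty partition to λ. -/
def ActsToCore (n : ℕ) (w : Equiv.Perm (Fin n → ℝ)) (lam : YoungDiagram) : Prop :=
  ∃ l : List (Fin n), (l.map (gen n)).prod = w ∧ wordAct n l = lam

/-- The bead positions of the abacus of λ: first-column hook lengths and all
negative integers. -/
def beads (lam : YoungDiagram) : Set ℤ :=
  {z | z < 0 ∨ ∃ k : ℕ, (k, 0) ∈ lam ∧ z = (hook lam k 0 : ℤ)}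

/-- The largest level of runner c containing a bead (entry rn + c is at level r). -/
noncomputable def maxLevel (n : ℕ) (B : Set ℤ) (c : ℕ) : ℤ :=
  sSup {r : ℤ | r * (n : ℤ) + (c : ℤ) ∈ B}

/-- The balance number of an abacus. -/
noncomputable def balance (n : ℕ) (B : Set ℤ) : ℤ := ∑ c ∈ Finset.range n, maxLevel n B c

/-- Shift all abacus entries by d. -/
def shiftSet (d : ℤ) (B : Set ℤ) : Set ℤ := {z | z - d ∈ B}

/-- The vector n⃗(λ): largest bead levels of the runners of the balanced abacus of λ. -/
noncomputable def nvec (n : ℕ) (lam : YoungDiagram) : Fin n → ℤ :=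
  fun i => maxLevel n (shiftSet (-(balance n (beads lam))) (beads lam)) (i : ℕ)

/-- n⃗(λ) as a real vector. -/
noncomputable def nvecR (n : ℕ) (lam : YoungDiagram) : Fin n → ℝ :=
  fun i => ((nvec n lam i : ℤ) : ℝ)

/-- The root lattice Q ⊆ V: integer vectors with sum zero. -/
def QSet (n : ℕ) : Set (Fin n → ℝ) := {v | (∀ i, ∃ z : ℤ, v i = (z : ℝ)) ∧ v ∈ V0 n}

/-- The region 𝔄_m. -/
def Amreg (n m : ℕ) : Set (Fin n → ℝ) :=
  {v | v ∈ V0 n ∧ (∀ i : ℕ, 1 ≤ i → i ≤ n - 1 → -(m : ℝ) ≤ ip n v (sroot n i)) ∧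
    ip n v (theta n) ≤ (m : ℝ) + 1}

/-- The dominant regions of the m-Shi arrangement. -/
def DomRegions (n m : ℕ) : Set (Set (Fin n → ℝ)) :=
  {R | (∃ v ∈ ShiComp n m, R = connectedComponentIn (ShiComp n m) v) ∧ R ⊆ Dominant n}

/-- The m-minimal alcoves lying in the dominant chamber. -/
def MinDomAlcoves (n m : ℕ) : Set (Set (Fin n → ℝ)) :=
  {A | ∃ w ∈ AffS n, A = ⇑w '' A0 n ∧ MMinimal n m w ∧ A ⊆ Dominant n}

/-- The m-minimal alcoves. -/
def MinAlcoves (n m : ℕ) : Set (Set (Fin n → ℝ)) :=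
  {A | ∃ w ∈ AffS n, A = ⇑w '' A0 n ∧ MMinimal n m w}

/-- The alcoves contained in the region 𝔄_m. -/
def AmAlcoves (n m : ℕ) : Set (Set (Fin n → ℝ)) :=
  {A | ∃ w ∈ AffS n, A = ⇑w '' A0 n ∧ A ⊆ Amreg n m}


/-! ### Auxiliary beta-number (abacus) machinery -/

section Abacus

open YoungDiagram

/-- Beta numbers (first-column hook lengths, extended to all rows; negative junk
for rows beyond the diagram). -/
private def bz (lam : YoungDiagram) (i : ℕ) : ℤ :=
  (lam.rowLen i : ℤ) + lam.colLen 0 - i - 1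

/-- The bead predicate for the (infinite) abacus of `lam`. -/
private def Pb (lam : YoungDiagram) (x : ℤ) : Prop := x < 0 ∨ ∃ k, bz lam k = x

private lemma bz_anti {lam : YoungDiagram} {i j : ℕ} (h : i < j) : bz lam j < bz lam i := by
  have h1 := lam.rowLen_anti i j h.le
  unfold bz; omega

private lemma bz_inj {lam : YoungDiagram} : Function.Injective (bz lam) := by
  intro a b hab
  rcases lt_trichotomy a b with h | h | h
  · exact absurd hab (bz_anti h).ne'
  · exact h
  · exact absurd hab (bz_anti h).ne

private lemma not_Pb_of_big {lam : YoungDiagram} {x : ℤ} (h : bz lam 0 < x) : ¬ Pb lam x := by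
  rintro (h1 | ⟨k, rfl⟩)
  · unfold bz at h; omega
  · rcases Nat.eq_zero_or_pos k with rfl | hk
    · omega
    · exact absurd h (not_lt.2 (bz_anti hk).le)

private lemma sum_ne (lam : YoungDiagram) (k j : ℕ) :
    (lam.rowLen k : ℤ) + lam.colLen j ≠ (j : ℤ) + k + 1 := by
  by_cases h : (k, j) ∈ lam
  · have h1 := mem_iff_lt_rowLen.1 h
    have h2 := mem_iff_lt_colLen.1 h
    omega
  · have h1 : ¬ j < lam.rowLen k := fun hc => h (mem_iff_lt_rowLen.2 hc)
    have h2 : ¬ k < lam.colLen j := fun hc => h (mem_iff_lt_colLen.2 hc)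
    omega

private lemma hook_cast {lam : YoungDiagram} {i j : ℕ} (h : (i, j) ∈ lam) :
    (hook lam i j : ℤ) = lam.rowLen i + lam.colLen j - i - j - 1 := by
  have h1 := mem_iff_lt_rowLen.1 h
  have h2 := mem_iff_lt_colLen.1 h
  unfold hook; omega

/-- Every nonnegative integer is either a bead or a "gap" of the abacus. -/
private lemma gap_or_bead (lam : YoungDiagram) (x : ℤ) (hx : 0 ≤ x) :
    (∃ k, bz lam k = x) ∨ ∃ j : ℕ, (j : ℤ) + lam.colLen 0 - lam.colLen j = x := by
  classical
  have hcol : ∀ j, lam.colLen j ≤ lam.colLen 0 := fun j => lam.colLen_anti 0 j (Nat.zero_le j)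
  have hex : ∃ j : ℕ, x < (j : ℤ) + lam.colLen 0 - lam.colLen j := by
    refine ⟨x.toNat + 1, ?_⟩
    have := hcol (x.toNat + 1)
    omega
  have hlt : x < ((Nat.find hex : ℕ) : ℤ) + lam.colLen 0 - lam.colLen (Nat.find hex) :=
    Nat.find_spec hex
  have hj0pos : Nat.find hex ≠ 0 := by
    intro h0
    rw [h0] at hlt
    omega
  obtain ⟨j, hj⟩ : ∃ j, Nat.find hex = j + 1 := ⟨Nat.find hex - 1, by omega⟩
  have hprev : ¬ x < (j : ℤ) + lam.colLen 0 - lam.colLen j := Nat.find_min hex (by omega)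
  rw [hj] at hlt
  rcases eq_or_lt_of_le (not_lt.1 hprev) with heq | hlt2
  · exact Or.inr ⟨j, heq⟩
  · left
    have hk0 : (0 : ℤ) ≤ (j : ℤ) + lam.colLen 0 - x := by
      have := hcol (j + 1)
      push_cast at hlt
      omega
    refine ⟨((j : ℤ) + lam.colLen 0 - x).toNat, ?_⟩
    have hkz : ((((j : ℤ) + lam.colLen 0 - x).toNat : ℕ) : ℤ) = (j : ℤ) + lam.colLen 0 - x :=
      Int.toNat_of_nonneg hk0
    have hmem : (((j : ℤ) + lam.colLen 0 - x).toNat, j) ∈ lam := by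
      rw [mem_iff_lt_colLen]
      omega
    have hnot : (((j : ℤ) + lam.colLen 0 - x).toNat, j + 1) ∉ lam := by
      rw [mem_iff_lt_colLen]
      push_cast at hlt
      omega
    have hrow : lam.rowLen (((j : ℤ) + lam.colLen 0 - x).toNat) = j + 1 := by
      have h1 := mem_iff_lt_rowLen.1 hmem
      have h2 : ¬ (j + 1) < lam.rowLen (((j : ℤ) + lam.colLen 0 - x).toNat) :=
        fun hc => hnot (mem_iff_lt_rowLen.2 hc)
      omega
    unfold bz
    rw [hrow]
    omega

/-- The master lemma: row `i` has a box of hook length `h` iff `bz i - h` is a gap. -/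
private lemma master {lam : YoungDiagram} (i : ℕ) (h : ℤ) (hh : 1 ≤ h) :
    (∃ j, (i, j) ∈ lam ∧ (hook lam i j : ℤ) = h) ↔ ¬ Pb lam (bz lam i - h) := by
  constructor
  · rintro ⟨j, hmem, hhook⟩
    have hc := hook_cast hmem
    have hcol : lam.colLen j ≤ lam.colLen 0 := lam.colLen_anti 0 j (Nat.zero_le j)
    have hx : bz lam i - h = (j : ℤ) + lam.colLen 0 - lam.colLen j := by unfold bz; omega
    rw [hx]
    rintro (hneg | ⟨k, hk⟩)
    · omega
    · have := sum_ne lam k j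
      unfold bz at hk
      omega
  · intro hnP
    have hx0 : 0 ≤ bz lam i - h := by
      by_contra hc
      exact hnP (Or.inl (by omega))
    rcases gap_or_bead lam _ hx0 with ⟨k, hk⟩ | ⟨j, hj⟩
    · exact absurd (Or.inr ⟨k, hk⟩) hnP
    · have hjlt : j < lam.rowLen i := by
        by_contra hc
        have h1 : lam.rowLen i ≤ j := not_lt.1 hc
        have h2 : ¬ i < lam.colLen j := fun hcc =>
          hc (mem_iff_lt_rowLen.1 (mem_iff_lt_colLen.2 hcc))
        unfold bz at hj
        omega
      have hmem : (i, j) ∈ lam := mem_iff_lt_rowLen.2 hjlt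
      refine ⟨j, hmem, ?_⟩
      have hc := hook_cast hmem
      unfold bz at hj
      omega

/-- `lam` is an `s`-core iff its abacus bead set is closed under subtracting `s`. -/
private lemma core_iff {lam : YoungDiagram} {s : ℕ} (hs : 1 ≤ s) :
    IsCore s lam ↔ ∀ x, Pb lam x → Pb lam (x - (s : ℤ)) := by
  constructor
  · intro hcore x hx
    rcases hx with hneg | ⟨k, rfl⟩
    · exact Or.inl (by omega)
    · by_contra hn
      obtain ⟨j, hmem, hhook⟩ := (master k (s : ℤ) (by exact_mod_cast hs)).2 hn
      have hks : hook lam k j = s := by exact_mod_cast hhook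
      exact hcore (k, j) ((mem_cells _).2 hmem) (hks ▸ dvd_refl s)
  · rintro hcl ⟨i, j⟩ hc hdvd
    have hmem : (i, j) ∈ lam := (mem_cells _).1 hc
    have hdvd : s ∣ hook lam i j := hdvd
    obtain ⟨t, ht⟩ := hdvd
    have hhook1 : 1 ≤ hook lam i j := by unfold hook; omega
    have hP : ∀ u : ℕ, Pb lam (bz lam i - ((s * u : ℕ) : ℤ)) := by
      intro u
      induction u with
      | zero => exact Or.inr ⟨i, by simp⟩
      | succ v ih =>
        have hstep := hcl _ ih
        rwa [show bz lam i - ((s * v : ℕ) : ℤ) - (s : ℤ)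
            = bz lam i - ((s * (v + 1) : ℕ) : ℤ) by push_cast; ring] at hstep
    have hst : 1 ≤ ((s * t : ℕ) : ℤ) := by
      have := ht ▸ hhook1
      exact_mod_cast this
    have hmm := (master i ((s * t : ℕ) : ℤ) hst).1
      ⟨j, hmem, by exact_mod_cast congrArg (Nat.cast : ℕ → ℤ) ht⟩
    exact hmm (hP t)

private lemma removable_iff {lam : YoungDiagram} {i j : ℕ} :
    Removable lam (i, j) ↔ (i, j) ∈ lam ∧ j + 1 = lam.rowLen i ∧ i + 1 = lam.colLen j := by
  constructor
  · rintro ⟨hmem, hh⟩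
    have hh : hook lam i j = 1 := hh
    have h1 := mem_iff_lt_rowLen.1 hmem
    have h2 := mem_iff_lt_colLen.1 hmem
    unfold hook at hh
    exact ⟨hmem, by omega, by omega⟩
  · rintro ⟨hmem, h1, h2⟩
    exact ⟨hmem, show hook lam i j = 1 by unfold hook; omega⟩

end Abacus

/-- An n-core λ is also an (mn+1)-core iff for every residue i it has at
most m removable i-boxes. -/
theorem statement15 (n : ℕ) (hn : 2 ≤ n) (m : ℕ) (hm : 1 ≤ m) (lam : YoungDiagram)
    (hcore : IsCore n lam) :
    IsCore (m * n + 1) lam ↔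
      ∀ r : ZMod n, {c : ℕ × ℕ | RemovableRes n r lam c}.ncard ≤ m := by
  classical
  haveI : NeZero n := ⟨by omega⟩
  have hn2 : (2 : ℤ) ≤ (n : ℤ) := by exact_mod_cast hn
  have hcl : ∀ x, Pb lam x → Pb lam (x - (n : ℤ)) := (core_iff (by omega)).1 hcore
  -- runner levels
  have hlev : ∀ c : ℤ, ∃ a : ℤ, ∀ ρ : ℤ, Pb lam (ρ * n + c) ↔ ρ ≤ a := by
    intro c
    have hstep : ∀ ρ : ℤ, ¬ Pb lam (ρ * n + c) → ¬ Pb lam ((ρ + 1) * n + c) := by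
      intro ρ hρ hP
      apply hρ
      have h := hcl _ hP
      rwa [show (ρ + 1) * n + c - (n : ℤ) = ρ * n + c by ring] at h
    have hinh : ∃ ρ : ℤ, ¬ Pb lam (ρ * n + c) := by
      refine ⟨|bz lam 0| + |c| + 1, not_Pb_of_big ?_⟩
      have h1 : (0 : ℤ) ≤ |bz lam 0| + |c| + 1 := by positivity
      have h2 : (|bz lam 0| + |c| + 1) * 2 ≤ (|bz lam 0| + |c| + 1) * (n : ℤ) :=
        mul_le_mul_of_nonneg_left hn2 h1
      have h3 := le_abs_self (bz lam 0)
      have h4 := neg_abs_le c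
      linarith [abs_nonneg (bz lam 0), abs_nonneg c]
    have hbdd : ∃ b : ℤ, ∀ ρ : ℤ, ¬ Pb lam (ρ * n + c) → b ≤ ρ := by
      refine ⟨-|c|, fun ρ hρ => ?_⟩
      by_contra hcon
      apply hρ
      left
      have h4 := le_abs_self c
      have h5 := abs_nonneg c
      nlinarith [mul_nonneg (by linarith : (0 : ℤ) ≤ (n : ℤ) - 2) (by omega : (0 : ℤ) ≤ -ρ)]
    obtain ⟨lb, hlb, hmin⟩ := Int.exists_least_of_bdd hbdd hinh
    refine ⟨lb - 1, fun ρ => ⟨fun hP => ?_, fun hle => ?_⟩⟩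
    · by_contra hgt
      exact (Int.le_induction (motive := fun ν _ => ¬ Pb lam (ν * n + c)) hlb
        (fun ν _ h => hstep ν h) ρ (by omega)) hP
    · by_contra hP
      have := hmin ρ hP
      omega
  choose A hA using hlev
  have hshift : ∀ c k : ℤ, A (c + k * n) = A c - k := by
    intro c k
    have h1 : A (c + k * n) + k ≤ A c := by
      have hP := (hA (c + k * n) (A (c + k * n))).2 le_rfl
      have hP' : Pb lam ((A (c + k * n) + k) * n + c) := by
        rwa [show (A (c + k * n) + k) * (n : ℤ) + c
            = A (c + k * n) * n + (c + k * n) by ring]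
      exact (hA c _).1 hP'
    have h2 : A c - k ≤ A (c + k * n) := by
      have hP := (hA c (A c)).2 le_rfl
      have hP' : Pb lam ((A c - k) * n + (c + k * n)) := by
        rwa [show (A c - k) * (n : ℤ) + (c + k * n) = A c * n + c by ring]
      exact (hA (c + k * n) _).1 hP'
    omega
  -- the (mn+1)-core condition in terms of runner levels
  have hcast : ((m * n + 1 : ℕ) : ℤ) = (m : ℤ) * n + 1 := by push_cast; ring
  have hcoreiff : IsCore (m * n + 1) lam ↔ ∀ c : ℤ, A c - A (c - 1) ≤ (m : ℤ) := by
    rw [core_iff (by omega)]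
    constructor
    · intro h c
      have hP := (hA c (A c)).2 le_rfl
      have h2 := h _ hP
      rw [hcast, show A c * (n : ℤ) + c - ((m : ℤ) * n + 1)
          = (A c - m) * n + (c - 1) by ring] at h2
      have := (hA (c - 1) _).1 h2
      omega
    · intro h x hx
      have h0 : (0 : ℤ) ≤ A x := (hA x 0).1 (by simpa using hx)
      have hP : Pb lam ((-(m : ℤ)) * n + (x - 1)) := (hA (x - 1) _).2 (by have := h x; omega)
      rw [hcast]
      rwa [show x - ((m : ℤ) * n + 1) = (-(m : ℤ)) * n + (x - 1) by ring]
  -- the count of removable boxes of a given residue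
  have hres : ∀ (r : ZMod n) (i j : ℕ),
      (res n (i, j) = r ↔ (n : ℤ) ∣ ((j : ℤ) - (i : ℤ) - (r.val : ℤ))) := by
    intro r i j
    rw [← ZMod.intCast_zmod_eq_zero_iff_dvd]
    have hc : (((j : ℤ) - (i : ℤ) - (r.val : ℤ) : ℤ) : ZMod n) = res n (i, j) - r := by
      unfold res
      push_cast
      rw [ZMod.natCast_val, ZMod.cast_id]
    rw [hc, sub_eq_zero]
  have hcount : ∀ r : ZMod n, {c : ℕ × ℕ | RemovableRes n r lam c}.ncard
      = (A ((lam.colLen 0 : ℤ) + (r.val : ℤ))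
        - A ((lam.colLen 0 : ℤ) + (r.val : ℤ) - 1)).toNat := by
    intro r
    set cI : ℤ := (lam.colLen 0 : ℤ) + (r.val : ℤ) with hcI
    set S : Set ℕ := {i | ¬ Pb lam (bz lam i - 1) ∧ (n : ℤ) ∣ (bz lam i - cI)} with hS
    have hseteq : {c : ℕ × ℕ | RemovableRes n r lam c}
        = (fun i => (i, lam.rowLen i - 1)) '' S := by
      ext ⟨i, j⟩
      simp only [Set.mem_setOf_eq, Set.mem_image, hS]
      constructor
      · rintro ⟨hrem, hresid⟩
        obtain ⟨hmem, h1, h2⟩ := removable_iff.1 hrem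
        have hhook : hook lam i j = 1 := hrem.2
        refine ⟨i, ⟨?_, ?_⟩, ?_⟩
        · exact (master i 1 le_rfl).1 ⟨j, hmem, by exact_mod_cast congrArg (Nat.cast : ℕ → ℤ) hhook⟩
        · have hd := (hres r i j).1 hresid
          have hbz : bz lam i - cI = (j : ℤ) - i - r.val := by
            rw [hcI]; unfold bz; omega
          rwa [hbz]
        · have : lam.rowLen i - 1 = j := by omega
          rw [this]
      · rintro ⟨i', ⟨hnp, hdvd⟩, heq⟩
        rw [Prod.mk.injEq] at heq
        obtain ⟨rfl, rfl⟩ := heq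
        obtain ⟨j', hmem, hhook⟩ := (master i' 1 le_rfl).2 hnp
        have hhook' : hook lam i' j' = 1 := by exact_mod_cast hhook
        have hrem : Removable lam (i', j') := ⟨hmem, hhook'⟩
        obtain ⟨_, h1, h2⟩ := removable_iff.1 hrem
        have hj' : j' = lam.rowLen i' - 1 := by omega
        subst hj'
        refine ⟨hrem, (hres r i' _).2 ?_⟩
        have hbz : bz lam i' - cI = ((lam.rowLen i' - 1 : ℕ) : ℤ) - i' - r.val := by
          rw [hcI]; unfold bz; omega
        rwa [hbz] at hdvd
    have hinj1 : Function.Injective (fun i : ℕ => (i, lam.rowLen i - 1)) :=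
      fun a b hab => by simpa using congrArg Prod.fst hab
    have himg : bz lam '' S = (fun ρ : ℤ => ρ * n + cI) '' Set.Ioc (A (cI - 1)) (A cI) := by
      ext b
      simp only [Set.mem_image, Set.mem_Ioc, hS, Set.mem_setOf_eq]
      constructor
      · rintro ⟨i, ⟨hnp, hdvd⟩, rfl⟩
        obtain ⟨ρ, hρ⟩ := hdvd
        have hb : bz lam i = ρ * n + cI := by linear_combination hρ
        have hPb : Pb lam (bz lam i) := Or.inr ⟨i, rfl⟩
        refine ⟨ρ, ⟨?_, (hA cI ρ).1 (hb ▸ hPb)⟩, hb.symm⟩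
        by_contra hle
        apply hnp
        have : Pb lam (ρ * n + (cI - 1)) := (hA (cI - 1) ρ).2 (by omega)
        rwa [show ρ * (n : ℤ) + (cI - 1) = (ρ * n + cI) - 1 by ring, ← hb] at this
      · rintro ⟨ρ, ⟨hgt, hle⟩, rfl⟩
        have hPb : Pb lam (ρ * n + cI) := (hA cI ρ).2 hle
        have hnP1 : ¬ Pb lam (ρ * n + cI - 1) := by
          intro hP
          have : Pb lam (ρ * n + (cI - 1)) := by
            rwa [show ρ * (n : ℤ) + (cI - 1) = ρ * n + cI - 1 by ring]
          exact absurd ((hA (cI - 1) ρ).1 this) (by omega)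
        rcases hPb with hneg | ⟨k, hk⟩
        · exact absurd (Or.inl (by omega)) hnP1
        · exact ⟨k, ⟨by rw [hk]; exact hnP1, ⟨ρ, by linear_combination hk⟩⟩, hk⟩
    have hinj2 : Function.Injective (fun ρ : ℤ => ρ * n + cI) := by
      intro a b hab
      simp only at hab
      have h1 : a * (n : ℤ) = b * n := by omega
      exact mul_right_cancel₀ (by exact_mod_cast (by omega : n ≠ 0)) h1
    rw [hseteq, Set.ncard_image_of_injective _ hinj1,
      ← Set.ncard_image_of_injective S (bz_inj (lam := lam)), himg,
      Set.ncard_image_of_injective _ hinj2, ← Finset.coe_Ioc, Set.ncard_coe_finset,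
      Int.card_Ioc]
  -- assemble
  rw [hcoreiff]
  constructor
  · intro h r
    rw [hcount r]
    have := h ((lam.colLen 0 : ℤ) + (r.val : ℤ))
    omega
  · intro h c
    have hcr := h (((c - (lam.colLen 0 : ℤ)) : ℤ) : ZMod n)
    rw [hcount] at hcr
    set r : ZMod n := (((c - (lam.colLen 0 : ℤ)) : ℤ) : ZMod n) with hr
    set cI : ℤ := (lam.colLen 0 : ℤ) + (r.val : ℤ) with hcI
    have hcdvd : (n : ℤ) ∣ (c - cI) := by
      rw [← ZMod.intCast_zmod_eq_zero_iff_dvd]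
      rw [hcI, hr]
      push_cast [ZMod.natCast_val, ZMod.cast_id]
      ring
    obtain ⟨k, hk⟩ := hcdvd
    have e1 : A c = A cI - k := by
      rw [show c = cI + k * n by linear_combination hk]
      exact hshift cI k
    have e2 : A (c - 1) = A (cI - 1) - k := by
      rw [show c - 1 = (cI - 1) + k * n by linear_combination hk]
      exact hshift (cI - 1) k
    omega

end FV
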